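/- For every fixed 1 ≤ p < 2, the sequence n ↦ R_{p,n} := Γ(5/p)Γ(1/p)/Γ(3/p)² · Γ(1+(n+2)/p)² / (Γ(1+n/p)·Γ(1+(n+4)/p)) is strictly increasing in n, and its limit as n → ∞ equals Γ(5/p)Γ(1/p)/Γ(3/p)². -/

import Mathlib

open Real Filter Finset Topology

private lemma factor_le {a x y : ℝ} (ha : 0 < a) (hx : 0 < x) (hxy : x ≤ y) :
    x * (x + 2*a) / (x + a)^2 ≤ y * (y + 2*a) / (y + a)^2 := by
  have hy : 0 < y := lt_of_lt_of_le hx hxy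
  rw [div_le_div_iff₀ (by positivity) (by positivity)]
  nlinarith [mul_nonneg (mul_nonneg (mul_pos ha ha).le (sub_nonneg.2 hxy))
    (show (0:ℝ) ≤ x + y + 2*a by linarith)]

private lemma factor_lt {a x y : ℝ} (ha : 0 < a) (hx : 0 < x) (hxy : x < y) :
    x * (x + 2*a) / (x + a)^2 < y * (y + 2*a) / (y + a)^2 := by
  have hy : 0 < y := hx.trans hxy
  rw [div_lt_div_iff₀ (by positivity) (by positivity)]
  nlinarith [mul_pos (mul_pos (mul_pos ha ha) (sub_pos.2 hxy))
    (show (0:ℝ) < x + y + 2*a by linarith)]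

private lemma factor_le_one {a x : ℝ} (ha : 0 < a) (hx : 0 < x) :
    x * (x + 2*a) / (x + a)^2 ≤ 1 := by
  rw [div_le_one (by positivity)]; nlinarith

private lemma tendsto_P {a x : ℝ} (ha : 0 < a) (hx : 0 < x) :
    Filter.Tendsto (fun m : ℕ => ∏ i ∈ Finset.range (m+1),
        ((x + i) * (x + 2*a + i) / (x + a + i)^2)) atTop
      (𝓝 (Gamma (x+a)^2 / (Gamma x * Gamma (x+2*a)))) := by
  have hd : Gamma x * Gamma (x+2*a) ≠ 0 :=
    (mul_pos (Gamma_pos_of_pos hx) (Gamma_pos_of_pos (by linarith))).ne'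
  have h := (((GammaSeq_tendsto_Gamma (x+a)).pow 2).div
    ((GammaSeq_tendsto_Gamma x).mul (GammaSeq_tendsto_Gamma (x+2*a))) hd)
  refine h.congr' ?_
  filter_upwards [eventually_gt_atTop 0] with m hm
  have hm' : (0:ℝ) < (m:ℝ) := Nat.cast_pos.2 hm
  have hB : ∀ s : ℝ, 0 < s → 0 < ∏ j ∈ Finset.range (m+1), (s + (j:ℝ)) :=
    fun s hs => Finset.prod_pos fun j _ => by positivity
  have hBx := hB x hx
  have hBa := hB (x+a) (by linarith)
  have hB2 := hB (x+2*a) (by linarith)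
  have hrx : (0:ℝ) < (m:ℝ) ^ x := rpow_pos_of_pos hm' x
  have hra : (0:ℝ) < (m:ℝ) ^ (x+a) := rpow_pos_of_pos hm' _
  have hfact : (0:ℝ) < (m.factorial : ℝ) := by positivity
  have h2 : (m:ℝ)^(x+2*a) = (m:ℝ)^(x+a) * (m:ℝ)^(x+a) / (m:ℝ)^x := by
    rw [eq_div_iff hrx.ne', ← rpow_add hm', ← rpow_add hm']; ring_nf
  have hL : (∏ i ∈ Finset.range (m+1), ((x + i) * (x + 2*a + i) / (x + a + i)^2))
      = ((∏ j ∈ Finset.range (m+1), (x + (j:ℝ))) *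
          (∏ j ∈ Finset.range (m+1), (x + 2*a + (j:ℝ)))) /
        (∏ j ∈ Finset.range (m+1), (x + a + (j:ℝ)))^2 := by
    rw [← Finset.prod_pow, ← Finset.prod_mul_distrib, ← Finset.prod_div_distrib]
  simp only [GammaSeq, hL, Pi.div_apply]
  field_simp
  rw [mul_comm a 2, h2]
  field_simp

private lemma factor_shift (a x t : ℝ) :
    (x + t) * (x + 2*a + t) / (x + a + t)^2
      = (x+t) * ((x+t) + 2*a) / ((x+t) + a)^2 := by ring_nf

private lemma Q_pos {a x : ℝ} (ha : 0 < a) (hx : 0 < x) :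
    0 < Gamma (x+a)^2 / (Gamma x * Gamma (x+2*a)) :=
  div_pos (pow_pos (Gamma_pos_of_pos (by linarith)) 2)
    (mul_pos (Gamma_pos_of_pos hx) (Gamma_pos_of_pos (by linarith)))

private lemma Q_lt {a x y : ℝ} (ha : 0 < a) (hx : 0 < x) (hxy : x < y) :
    Gamma (x+a)^2 / (Gamma x * Gamma (x+2*a))
      < Gamma (y+a)^2 / (Gamma y * Gamma (y+2*a)) := by
  have hy : 0 < y := hx.trans hxy
  set c : ℝ := (y * (y + 2*a) / (y + a)^2) / (x * (x + 2*a) / (x + a)^2) with hc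
  have hfx : 0 < x * (x + 2*a) / (x + a)^2 := by positivity
  have hc1 : 1 < c := (one_lt_div hfx).2 (factor_lt ha hx hxy)
  have key : ∀ m : ℕ,
      c * ∏ i ∈ Finset.range (m+1), ((x + i) * (x + 2*a + i) / (x + a + i)^2)
        ≤ ∏ i ∈ Finset.range (m+1), ((y + i) * (y + 2*a + i) / (y + a + i)^2) := by
    intro m
    rw [Finset.prod_range_succ', Finset.prod_range_succ']
    push_cast
    have h0 : c * (x * (x + 2*a) / (x + a)^2) = y * (y + 2*a) / (y + a)^2 := by
      rw [hc, div_mul_cancel₀ _ hfx.ne']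
    have hP : ∀ i : ℕ, (x + ((i:ℝ)+1)) * (x + 2*a + ((i:ℝ)+1)) / (x + a + ((i:ℝ)+1))^2
        ≤ (y + ((i:ℝ)+1)) * (y + 2*a + ((i:ℝ)+1)) / (y + a + ((i:ℝ)+1))^2 := by
      intro i
      rw [factor_shift, factor_shift]
      exact factor_le ha (by positivity) (by linarith)
    have hPprod : (∏ i ∈ Finset.range m,
          ((x + ((i:ℝ)+1)) * (x + 2*a + ((i:ℝ)+1)) / (x + a + ((i:ℝ)+1))^2))
        ≤ ∏ i ∈ Finset.range m,
          ((y + ((i:ℝ)+1)) * (y + 2*a + ((i:ℝ)+1)) / (y + a + ((i:ℝ)+1))^2) :=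
      Finset.prod_le_prod (fun i _ => by positivity) (fun i _ => hP i)
    simp only [Nat.cast_zero, add_zero] at *
    calc c * ((∏ i ∈ Finset.range m,
            ((x + ((i:ℝ)+1)) * (x + 2*a + ((i:ℝ)+1)) / (x + a + ((i:ℝ)+1))^2))
          * (x * (x + 2*a) / (x + a)^2))
        = (∏ i ∈ Finset.range m,
            ((x + ((i:ℝ)+1)) * (x + 2*a + ((i:ℝ)+1)) / (x + a + ((i:ℝ)+1))^2))
          * (c * (x * (x + 2*a) / (x + a)^2)) := by ring
      _ = (∏ i ∈ Finset.range m,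
            ((x + ((i:ℝ)+1)) * (x + 2*a + ((i:ℝ)+1)) / (x + a + ((i:ℝ)+1))^2))
          * (y * (y + 2*a) / (y + a)^2) := by rw [h0]
      _ ≤ (∏ i ∈ Finset.range m,
            ((y + ((i:ℝ)+1)) * (y + 2*a + ((i:ℝ)+1)) / (y + a + ((i:ℝ)+1))^2))
          * (y * (y + 2*a) / (y + a)^2) :=
        mul_le_mul_of_nonneg_right hPprod (by positivity)
  have hle : c * (Gamma (x+a)^2 / (Gamma x * Gamma (x+2*a)))
      ≤ Gamma (y+a)^2 / (Gamma y * Gamma (y+2*a)) :=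
    le_of_tendsto_of_tendsto' ((tendsto_P ha hx).const_mul c) (tendsto_P ha hy) key
  nlinarith [Q_pos ha hx]

private lemma prod_one_sub_ge (b : ℕ → ℝ) (hb0 : ∀ i, 0 ≤ b i) (hb1 : ∀ i, b i ≤ 1)
    (n : ℕ) : 1 - ∑ i ∈ Finset.range n, b i ≤ ∏ i ∈ Finset.range n, (1 - b i) := by
  induction n with
  | zero => simp
  | succ n ih =>
    rw [Finset.prod_range_succ, Finset.sum_range_succ]
    have h1 : 0 ≤ ∏ i ∈ Finset.range n, (1 - b i) :=
      Finset.prod_nonneg fun i _ => by linarith [hb1 i]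
    have hS : 0 ≤ ∑ i ∈ Finset.range n, b i := Finset.sum_nonneg fun i _ => hb0 i
    nlinarith [hb0 n, hb1 n,
      mul_le_mul_of_nonneg_right ih (show (0:ℝ) ≤ 1 - b n by linarith [hb1 n]),
      mul_nonneg hS (hb0 n)]

private lemma Q_le_one {a x : ℝ} (ha : 0 < a) (hx : 0 < x) :
    Gamma (x+a)^2 / (Gamma x * Gamma (x+2*a)) ≤ 1 := by
  refine le_of_tendsto (tendsto_P ha hx) (Eventually.of_forall fun m => ?_)
  refine Finset.prod_le_one (fun i _ => by positivity) (fun i _ => ?_)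
  rw [factor_shift]
  exact factor_le_one ha (by positivity)

private lemma Q_ge {a x : ℝ} (ha : 1 ≤ a) (hx : 0 < x) :
    1 - a^2 / x ≤ Gamma (x+a)^2 / (Gamma x * Gamma (x+2*a)) := by
  have ha0 : 0 < a := lt_of_lt_of_le one_pos ha
  refine ge_of_tendsto (tendsto_P ha0 hx) (Eventually.of_forall fun m => ?_)
  set b : ℕ → ℝ := fun i => a^2 / (x + a + i)^2 with hb
  have hb0 : ∀ i, 0 ≤ b i := fun i => by positivity
  have hb1 : ∀ i, b i ≤ 1 := by
    intro i
    rw [hb, div_le_one (by positivity)]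
    nlinarith [Nat.cast_nonneg (α := ℝ) i]
  have hfac : ∀ i : ℕ, (1 : ℝ) - b i = (x + i) * (x + 2*a + i) / (x + a + i)^2 := by
    intro i
    have h : (x + a + (i:ℝ)) ≠ 0 := by positivity
    rw [hb]
    field_simp
    ring
  have hsum : ∑ i ∈ Finset.range (m+1), b i ≤ a^2 / x := by
    set F : ℕ → ℝ := fun i => 1/(x+(i:ℝ)) with hF
    have hterm : ∀ i : ℕ, b i ≤ a^2 * (F i - F (i+1)) := by
      intro i
      have hxi : (0:ℝ) < x + i := by positivity
      have hxi1 : (0:ℝ) < x + ((i:ℝ)+1) := by positivity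
      have he : F i - F (i+1) = 1/((x+(i:ℝ))*(x+((i:ℝ)+1))) := by
        simp only [hF]
        push_cast
        rw [div_sub_div _ _ hxi.ne' hxi1.ne']
        rw [show (1*(x+((i:ℝ)+1)) - (x+(i:ℝ))*1) = 1 by ring]
      rw [he, hb, mul_one_div]
      apply div_le_div_of_nonneg_left (by positivity) (by positivity)
      nlinarith [Nat.cast_nonneg (α := ℝ) i]
    have htel : ∑ i ∈ Finset.range (m+1), (F i - F (i+1)) = F 0 - F (m+1) :=
      Finset.sum_range_sub' F (m+1)
    have hFm : 0 < F (m+1) := by simp only [hF]; positivity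
    calc ∑ i ∈ Finset.range (m+1), b i
        ≤ ∑ i ∈ Finset.range (m+1), a^2 * (F i - F (i+1)) :=
          Finset.sum_le_sum fun i _ => hterm i
      _ = a^2 * (F 0 - F (m+1)) := by rw [← Finset.mul_sum, htel]
      _ ≤ a^2 * F 0 := by nlinarith
      _ = a^2 / x := by simp [hF]; ring
  calc 1 - a^2/x ≤ 1 - ∑ i ∈ Finset.range (m+1), b i := by linarith
    _ ≤ ∏ i ∈ Finset.range (m+1), (1 - b i) := prod_one_sub_ge b hb0 hb1 (m+1)
    _ = ∏ i ∈ Finset.range (m+1), ((x + i) * (x + 2*a + i) / (x + a + i)^2) :=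
        Finset.prod_congr rfl fun i _ => hfac i

theorem stmt_9 (p : ℝ) (hp1 : 1 ≤ p) (hp2 : p < 2) :
    StrictMono (fun n : ℕ =>
      Gamma (5 / p) * Gamma (1 / p) / Gamma (3 / p) ^ 2 *
        (Gamma (1 + ((n : ℝ) + 2) / p) ^ 2 /
          (Gamma (1 + (n : ℝ) / p) * Gamma (1 + ((n : ℝ) + 4) / p)))) ∧
    Tendsto (fun n : ℕ =>
      Gamma (5 / p) * Gamma (1 / p) / Gamma (3 / p) ^ 2 *
        (Gamma (1 + ((n : ℝ) + 2) / p) ^ 2 /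
          (Gamma (1 + (n : ℝ) / p) * Gamma (1 + ((n : ℝ) + 4) / p))))
      atTop (nhds (Gamma (5 / p) * Gamma (1 / p) / Gamma (3 / p) ^ 2)) := by
  have hp0 : (0:ℝ) < p := lt_of_lt_of_le one_pos hp1
  set a : ℝ := 2/p with haa
  have ha0 : 0 < a := by positivity
  have ha1 : 1 ≤ a := (one_le_div hp0).2 (by linarith)
  have hC : 0 < Gamma (5/p) * Gamma (1/p) / Gamma (3/p)^2 :=
    div_pos (mul_pos (Gamma_pos_of_pos (by positivity)) (Gamma_pos_of_pos (by positivity)))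
      (pow_pos (Gamma_pos_of_pos (by positivity)) 2)
  have hxpos : ∀ n : ℕ, (0:ℝ) < 1 + (n:ℝ)/p := fun n => by positivity
  have key : ∀ n : ℕ,
      Gamma (1 + ((n:ℝ)+2)/p)^2 / (Gamma (1 + (n:ℝ)/p) * Gamma (1 + ((n:ℝ)+4)/p))
        = Gamma ((1 + (n:ℝ)/p) + a)^2 /
            (Gamma (1 + (n:ℝ)/p) * Gamma ((1 + (n:ℝ)/p) + 2*a)) := by
    intro n
    rw [show 1 + ((n:ℝ)+2)/p = (1 + (n:ℝ)/p) + a by rw [haa]; field_simp; ring,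
      show 1 + ((n:ℝ)+4)/p = (1 + (n:ℝ)/p) + 2*a by rw [haa]; field_simp; ring]
  constructor
  · intro n m hnm
    simp only
    rw [key n, key m]
    refine mul_lt_mul_of_pos_left ?_ hC
    refine Q_lt ha0 (hxpos n) ?_
    have h : (n:ℝ) < m := Nat.cast_lt.2 hnm
    gcongr
  · have hlow : Tendsto (fun n : ℕ => 1 - a^2/(1 + (n:ℝ)/p)) atTop (𝓝 1) := by
      have h1 : Tendsto (fun n : ℕ => 1 + (n:ℝ)/p) atTop atTop :=
        tendsto_atTop_add_const_left _ 1
          (tendsto_natCast_atTop_atTop.atTop_div_const hp0)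
      have h2 : Tendsto (fun n : ℕ => a^2/(1 + (n:ℝ)/p)) atTop (𝓝 0) :=
        Tendsto.div_atTop tendsto_const_nhds h1
      simpa using tendsto_const_nhds.sub h2
    have hmain : Tendsto (fun n : ℕ =>
        Gamma (1 + ((n:ℝ)+2)/p)^2 / (Gamma (1 + (n:ℝ)/p) * Gamma (1 + ((n:ℝ)+4)/p)))
        atTop (𝓝 1) := by
      refine tendsto_of_tendsto_of_tendsto_of_le_of_le hlow tendsto_const_nhds ?_ ?_
      · intro n
        simp only
        rw [key n]
        exact Q_ge ha1 (hxpos n)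
      · intro n
        simp only
        rw [key n]
        exact Q_le_one ha0 (hxpos n)
    simpa using hmain.const_mul (Gamma (5/p) * Gamma (1/p) / Gamma (3/p)^2)
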